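/- For every t ∈ ℝ, the third Frenet curvature of x satisfies κ₃(t) = α₁α₂ / √(a₁²α₁⁴ + a₂²α₂⁴). -/

import Mathlib

open Real intervalIntegral

/-- The curve `x(t) = (a₁ cos(α₁ t), a₁ sin(α₁ t), a₂ cos(α₂ t), a₂ sin(α₂ t))` in `ℝ⁴`. -/
noncomputable def curveX (a₁ a₂ α₁ α₂ : ℝ) : ℝ → EuclideanSpace ℝ (Fin 4) :=
  fun t => (WithLp.equiv 2 (Fin 4 → ℝ)).symm
    ![a₁ * Real.cos (α₁ * t), a₁ * Real.sin (α₁ * t),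
      a₂ * Real.cos (α₂ * t), a₂ * Real.sin (α₂ * t)]

/-- `D_j(t)`: the determinant of the `j × j` Gram matrix whose `(a,b)` entry is the inner
product of the `a`-th and `b`-th derivatives of `y` at `t` (`1 ≤ a, b ≤ j`); `D₀ = 1`. -/
noncomputable def gramDet {n : ℕ} (y : ℝ → EuclideanSpace ℝ (Fin n)) (j : ℕ) (t : ℝ) : ℝ :=
  Matrix.det (Matrix.of fun a b : Fin j =>
    (inner ℝ (iteratedDeriv (a.val + 1) y t) (iteratedDeriv (b.val + 1) y t) : ℝ))

/-- The `j`-th Frenet curvature `κ_j(t) = √(D_{j+1} D_{j-1}) / (D_j ‖y′(t)‖)` (for `j ≥ 1`). -/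
noncomputable def frenetCurvature {n : ℕ} (y : ℝ → EuclideanSpace ℝ (Fin n)) (j : ℕ) (t : ℝ) :
    ℝ :=
  Real.sqrt (gramDet y (j + 1) t * gramDet y (j - 1) t) / (gramDet y j t * ‖deriv y t‖)

/-- The Plücker coordinates `w(t)` of the exterior product of `x′(t)` and `x″(t)`. -/
noncomputable def oscW (x : ℝ → EuclideanSpace ℝ (Fin 4)) (t : ℝ) : EuclideanSpace ℝ (Fin 6) :=
  (WithLp.equiv 2 (Fin 6 → ℝ)).symm
    ![deriv x t 0 * deriv (deriv x) t 1 - deriv x t 1 * deriv (deriv x) t 0,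
      deriv x t 0 * deriv (deriv x) t 2 - deriv x t 2 * deriv (deriv x) t 0,
      deriv x t 0 * deriv (deriv x) t 3 - deriv x t 3 * deriv (deriv x) t 0,
      deriv x t 1 * deriv (deriv x) t 2 - deriv x t 2 * deriv (deriv x) t 1,
      deriv x t 1 * deriv (deriv x) t 3 - deriv x t 3 * deriv (deriv x) t 1,
      deriv x t 2 * deriv (deriv x) t 3 - deriv x t 3 * deriv (deriv x) t 2]

/-- The osculating indicatrix `x̃(t) = w(t) / ‖w(t)‖`. -/
noncomputable def oscInd (x : ℝ → EuclideanSpace ℝ (Fin 4)) (t : ℝ) :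
    EuclideanSpace ℝ (Fin 6) :=
  ‖oscW x t‖⁻¹ • oscW x t

/-! ### Auxiliary material -/

noncomputable def vec4 (p q r s : ℝ) : EuclideanSpace ℝ (Fin 4) :=
  (WithLp.equiv 2 (Fin 4 → ℝ)).symm ![p, q, r, s]

noncomputable def X1 (a₁ a₂ α₁ α₂ : ℝ) : ℝ → EuclideanSpace ℝ (Fin 4) := fun t =>
  vec4 ((-(a₁ * α₁)) * Real.sin (α₁ * t)) ((a₁ * α₁) * Real.cos (α₁ * t))
    ((-(a₂ * α₂)) * Real.sin (α₂ * t)) ((a₂ * α₂) * Real.cos (α₂ * t))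

noncomputable def X2 (a₁ a₂ α₁ α₂ : ℝ) : ℝ → EuclideanSpace ℝ (Fin 4) := fun t =>
  vec4 ((-(a₁ * α₁ ^ 2)) * Real.cos (α₁ * t)) ((-(a₁ * α₁ ^ 2)) * Real.sin (α₁ * t))
    ((-(a₂ * α₂ ^ 2)) * Real.cos (α₂ * t)) ((-(a₂ * α₂ ^ 2)) * Real.sin (α₂ * t))

noncomputable def X3 (a₁ a₂ α₁ α₂ : ℝ) : ℝ → EuclideanSpace ℝ (Fin 4) := fun t =>
  vec4 ((a₁ * α₁ ^ 3) * Real.sin (α₁ * t)) ((-(a₁ * α₁ ^ 3)) * Real.cos (α₁ * t))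
    ((a₂ * α₂ ^ 3) * Real.sin (α₂ * t)) ((-(a₂ * α₂ ^ 3)) * Real.cos (α₂ * t))

noncomputable def X4 (a₁ a₂ α₁ α₂ : ℝ) : ℝ → EuclideanSpace ℝ (Fin 4) := fun t =>
  vec4 ((a₁ * α₁ ^ 4) * Real.cos (α₁ * t)) ((a₁ * α₁ ^ 4) * Real.sin (α₁ * t))
    ((a₂ * α₂ ^ 4) * Real.cos (α₂ * t)) ((a₂ * α₂ ^ 4) * Real.sin (α₂ * t))

lemma hasDerivAt_vec4 {f₀ f₁ f₂ f₃ : ℝ → ℝ} {d₀ d₁ d₂ d₃ : ℝ} {t : ℝ}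
    (h₀ : HasDerivAt f₀ d₀ t) (h₁ : HasDerivAt f₁ d₁ t)
    (h₂ : HasDerivAt f₂ d₂ t) (h₃ : HasDerivAt f₃ d₃ t) :
    HasDerivAt (fun s => vec4 (f₀ s) (f₁ s) (f₂ s) (f₃ s)) (vec4 d₀ d₁ d₂ d₃) t := by
  have hpi : HasDerivAt (fun s => (![f₀ s, f₁ s, f₂ s, f₃ s] : Fin 4 → ℝ))
      (![d₀, d₁, d₂, d₃]) t := by
    rw [hasDerivAt_pi]
    intro i
    fin_cases i <;> simpa
  have := (((EuclideanSpace.equiv (Fin 4) ℝ).symm :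
      (Fin 4 → ℝ) →L[ℝ] EuclideanSpace ℝ (Fin 4)).hasFDerivAt).comp_hasDerivAt t hpi
  exact this

lemma hda_cos' (a α d t : ℝ) (h : d = -(a * α * Real.sin (α * t))) :
    HasDerivAt (fun s => a * Real.cos (α * s)) d t := by
  have hl : HasDerivAt (fun s : ℝ => α * s) α t := by
    simpa using (hasDerivAt_id t).const_mul α
  have := ((Real.hasDerivAt_cos (α * t)).comp t hl).const_mul a
  rw [show d = a * (-Real.sin (α * t) * α) by rw [h]; ring]; exact this

lemma hda_sin' (a α d t : ℝ) (h : d = a * α * Real.cos (α * t)) :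
    HasDerivAt (fun s => a * Real.sin (α * s)) d t := by
  have hl : HasDerivAt (fun s : ℝ => α * s) α t := by
    simpa using (hasDerivAt_id t).const_mul α
  have := ((Real.hasDerivAt_sin (α * t)).comp t hl).const_mul a
  rw [show d = a * (Real.cos (α * t) * α) by rw [h]; ring]; exact this

lemma hd01 (a₁ a₂ α₁ α₂ t : ℝ) :
    HasDerivAt (curveX a₁ a₂ α₁ α₂) (X1 a₁ a₂ α₁ α₂ t) t :=
  hasDerivAt_vec4 (hda_cos' a₁ α₁ _ t (by ring)) (hda_sin' a₁ α₁ _ t (by ring))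
    (hda_cos' a₂ α₂ _ t (by ring)) (hda_sin' a₂ α₂ _ t (by ring))

lemma derivCurveX (a₁ a₂ α₁ α₂ : ℝ) :
    deriv (curveX a₁ a₂ α₁ α₂) = X1 a₁ a₂ α₁ α₂ :=
  funext fun s => (hd01 a₁ a₂ α₁ α₂ s).deriv

lemma det_fin_four' (a b c d e f g h i j k l m n o p : ℝ) :
    Matrix.det !![a,b,c,d; e,f,g,h; i,j,k,l; m,n,o,p]
      = a*(f*(k*p-l*o)-g*(j*p-l*n)+h*(j*o-k*n))
        - b*(e*(k*p-l*o)-g*(i*p-l*m)+h*(i*o-k*m))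
        + c*(e*(j*p-l*n)-f*(i*p-l*m)+h*(i*n-j*m))
        - d*(e*(j*o-k*n)-f*(i*o-k*m)+g*(i*n-j*m)) := by
  rw [Matrix.det_succ_row_zero]
  simp [Fin.sum_univ_succ, Matrix.det_fin_three,
    Matrix.submatrix_apply, Fin.succAbove_zero, Fin.succ_succAbove_zero, Fin.succ_succAbove_succ]
  simp [Fin.succAbove, Fin.lt_def]
  ring

lemma hd12 (a₁ a₂ α₁ α₂ t : ℝ) :
    HasDerivAt (X1 a₁ a₂ α₁ α₂) (X2 a₁ a₂ α₁ α₂ t) t :=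
  hasDerivAt_vec4 (hda_sin' (-(a₁ * α₁)) α₁ _ t (by ring)) (hda_cos' (a₁ * α₁) α₁ _ t (by ring))
    (hda_sin' (-(a₂ * α₂)) α₂ _ t (by ring)) (hda_cos' (a₂ * α₂) α₂ _ t (by ring))

lemma hd23 (a₁ a₂ α₁ α₂ t : ℝ) :
    HasDerivAt (X2 a₁ a₂ α₁ α₂) (X3 a₁ a₂ α₁ α₂ t) t :=
  hasDerivAt_vec4 (hda_cos' (-(a₁ * α₁ ^ 2)) α₁ _ t (by ring))
    (hda_sin' (-(a₁ * α₁ ^ 2)) α₁ _ t (by ring))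
    (hda_cos' (-(a₂ * α₂ ^ 2)) α₂ _ t (by ring))
    (hda_sin' (-(a₂ * α₂ ^ 2)) α₂ _ t (by ring))

lemma hd34 (a₁ a₂ α₁ α₂ t : ℝ) :
    HasDerivAt (X3 a₁ a₂ α₁ α₂) (X4 a₁ a₂ α₁ α₂ t) t :=
  hasDerivAt_vec4 (hda_sin' (a₁ * α₁ ^ 3) α₁ _ t (by ring))
    (hda_cos' (-(a₁ * α₁ ^ 3)) α₁ _ t (by ring))
    (hda_sin' (a₂ * α₂ ^ 3) α₂ _ t (by ring))
    (hda_cos' (-(a₂ * α₂ ^ 3)) α₂ _ t (by ring))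

lemma iter1 (a₁ a₂ α₁ α₂ : ℝ) :
    iteratedDeriv 1 (curveX a₁ a₂ α₁ α₂) = X1 a₁ a₂ α₁ α₂ := by
  rw [iteratedDeriv_one]
  exact funext fun s => (hd01 a₁ a₂ α₁ α₂ s).deriv

lemma iter2 (a₁ a₂ α₁ α₂ : ℝ) :
    iteratedDeriv 2 (curveX a₁ a₂ α₁ α₂) = X2 a₁ a₂ α₁ α₂ := by
  have h : iteratedDeriv 2 (curveX a₁ a₂ α₁ α₂)
      = deriv (iteratedDeriv 1 (curveX a₁ a₂ α₁ α₂)) := iteratedDeriv_succ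
  rw [h, iter1]
  exact funext fun s => (hd12 a₁ a₂ α₁ α₂ s).deriv

lemma iter3 (a₁ a₂ α₁ α₂ : ℝ) :
    iteratedDeriv 3 (curveX a₁ a₂ α₁ α₂) = X3 a₁ a₂ α₁ α₂ := by
  have h : iteratedDeriv 3 (curveX a₁ a₂ α₁ α₂)
      = deriv (iteratedDeriv 2 (curveX a₁ a₂ α₁ α₂)) := iteratedDeriv_succ
  rw [h, iter2]
  exact funext fun s => (hd23 a₁ a₂ α₁ α₂ s).deriv

lemma iter4 (a₁ a₂ α₁ α₂ : ℝ) :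
    iteratedDeriv 4 (curveX a₁ a₂ α₁ α₂) = X4 a₁ a₂ α₁ α₂ := by
  have h : iteratedDeriv 4 (curveX a₁ a₂ α₁ α₂)
      = deriv (iteratedDeriv 3 (curveX a₁ a₂ α₁ α₂)) := iteratedDeriv_succ
  rw [h, iter3]
  exact funext fun s => (hd34 a₁ a₂ α₁ α₂ s).deriv

lemma gram2 (a₁ a₂ α₁ α₂ t : ℝ) :
    gramDet (curveX a₁ a₂ α₁ α₂) 2 t
      = (a₁ ^ 2 * α₁ ^ 2 + a₂ ^ 2 * α₂ ^ 2) * (a₁ ^ 2 * α₁ ^ 4 + a₂ ^ 2 * α₂ ^ 4) := by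
  unfold gramDet
  have hm : (Matrix.of fun a b : Fin 2 =>
      (inner ℝ (iteratedDeriv (a.val + 1) (curveX a₁ a₂ α₁ α₂) t)
        (iteratedDeriv (b.val + 1) (curveX a₁ a₂ α₁ α₂) t) : ℝ))
      = !![a₁ ^ 2 * α₁ ^ 2 + a₂ ^ 2 * α₂ ^ 2, 0;
           0, a₁ ^ 2 * α₁ ^ 4 + a₂ ^ 2 * α₂ ^ 4] := by
    ext a b
    fin_cases a <;> fin_cases b <;>
      · try simp [iter1, iter2, derivCurveX, (show ((0:Fin 4):ℕ) = 0 from rfl), (show ((1:Fin 4):ℕ) = 1 from rfl), (show ((2:Fin 4):ℕ) = 2 from rfl), (show ((3:Fin 4):ℕ) = 3 from rfl), (show ((0:Fin 3):ℕ) = 0 from rfl), (show ((1:Fin 3):ℕ) = 1 from rfl), (show ((2:Fin 3):ℕ) = 2 from rfl), (show ((0:Fin 2):ℕ) = 0 from rfl), (show ((1:Fin 2):ℕ) = 1 from rfl), X1, X2, vec4, PiLp.inner_apply, Fin.sum_univ_four,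
          RCLike.inner_apply, WithLp.equiv_symm_apply, PiLp.toLp_apply]
        try ring_nf
        try simp only [Real.cos_sq']
        try ring
  rw [hm, Matrix.det_fin_two]
  simp

lemma gram3 (a₁ a₂ α₁ α₂ t : ℝ) :
    gramDet (curveX a₁ a₂ α₁ α₂) 3 t
      = (a₁ ^ 2 * α₁ ^ 4 + a₂ ^ 2 * α₂ ^ 4)
        * (a₁ ^ 2 * a₂ ^ 2 * α₁ ^ 2 * α₂ ^ 2 * (α₁ ^ 2 - α₂ ^ 2) ^ 2) := by
  unfold gramDet
  have hm : (Matrix.of fun a b : Fin 3 =>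
      (inner ℝ (iteratedDeriv (a.val + 1) (curveX a₁ a₂ α₁ α₂) t)
        (iteratedDeriv (b.val + 1) (curveX a₁ a₂ α₁ α₂) t) : ℝ))
      = !![a₁ ^ 2 * α₁ ^ 2 + a₂ ^ 2 * α₂ ^ 2, 0, -(a₁ ^ 2 * α₁ ^ 4 + a₂ ^ 2 * α₂ ^ 4);
           0, a₁ ^ 2 * α₁ ^ 4 + a₂ ^ 2 * α₂ ^ 4, 0;
           -(a₁ ^ 2 * α₁ ^ 4 + a₂ ^ 2 * α₂ ^ 4), 0, a₁ ^ 2 * α₁ ^ 6 + a₂ ^ 2 * α₂ ^ 6] := by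
    ext a b
    fin_cases a <;> fin_cases b <;>
      · try simp [iter1, iter2, iter3, derivCurveX, (show ((0:Fin 4):ℕ) = 0 from rfl), (show ((1:Fin 4):ℕ) = 1 from rfl), (show ((2:Fin 4):ℕ) = 2 from rfl), (show ((3:Fin 4):ℕ) = 3 from rfl), (show ((0:Fin 3):ℕ) = 0 from rfl), (show ((1:Fin 3):ℕ) = 1 from rfl), (show ((2:Fin 3):ℕ) = 2 from rfl), (show ((0:Fin 2):ℕ) = 0 from rfl), (show ((1:Fin 2):ℕ) = 1 from rfl), X1, X2, X3, vec4, PiLp.inner_apply, Fin.sum_univ_four,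
          RCLike.inner_apply, WithLp.equiv_symm_apply, PiLp.toLp_apply]
        try ring_nf
        try simp only [Real.cos_sq']
        try ring
  rw [hm, Matrix.det_fin_three]
  norm_num
  simp [Matrix.cons_val]
  ring

set_option maxHeartbeats 1000000 in
lemma gram4 (a₁ a₂ α₁ α₂ t : ℝ) :
    gramDet (curveX a₁ a₂ α₁ α₂) 4 t
      = (a₁ ^ 2 * a₂ ^ 2 * α₁ ^ 2 * α₂ ^ 2 * (α₁ ^ 2 - α₂ ^ 2) ^ 2) ^ 2
        * α₁ ^ 2 * α₂ ^ 2 := by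
  unfold gramDet
  have hm : (Matrix.of fun a b : Fin 4 =>
      (inner ℝ (iteratedDeriv (a.val + 1) (curveX a₁ a₂ α₁ α₂) t)
        (iteratedDeriv (b.val + 1) (curveX a₁ a₂ α₁ α₂) t) : ℝ))
      = !![a₁ ^ 2 * α₁ ^ 2 + a₂ ^ 2 * α₂ ^ 2, 0, -(a₁ ^ 2 * α₁ ^ 4 + a₂ ^ 2 * α₂ ^ 4), 0;
           0, a₁ ^ 2 * α₁ ^ 4 + a₂ ^ 2 * α₂ ^ 4, 0, -(a₁ ^ 2 * α₁ ^ 6 + a₂ ^ 2 * α₂ ^ 6);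
           -(a₁ ^ 2 * α₁ ^ 4 + a₂ ^ 2 * α₂ ^ 4), 0, a₁ ^ 2 * α₁ ^ 6 + a₂ ^ 2 * α₂ ^ 6, 0;
           0, -(a₁ ^ 2 * α₁ ^ 6 + a₂ ^ 2 * α₂ ^ 6), 0,
             a₁ ^ 2 * α₁ ^ 8 + a₂ ^ 2 * α₂ ^ 8] := by
    ext a b
    fin_cases a <;> fin_cases b <;>
      · try simp [iter1, iter2, iter3, iter4, derivCurveX, (show ((0:Fin 4):ℕ) = 0 from rfl), (show ((1:Fin 4):ℕ) = 1 from rfl), (show ((2:Fin 4):ℕ) = 2 from rfl), (show ((3:Fin 4):ℕ) = 3 from rfl), (show ((0:Fin 3):ℕ) = 0 from rfl), (show ((1:Fin 3):ℕ) = 1 from rfl), (show ((2:Fin 3):ℕ) = 2 from rfl), (show ((0:Fin 2):ℕ) = 0 from rfl), (show ((1:Fin 2):ℕ) = 1 from rfl), X1, X2, X3, X4, vec4, PiLp.inner_apply,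
          Fin.sum_univ_four, RCLike.inner_apply, WithLp.equiv_symm_apply, PiLp.toLp_apply]
        try ring_nf
        try simp only [Real.cos_sq']
        try ring
  rw [hm, det_fin_four']
  ring

theorem stmt5 (a₁ a₂ α₁ α₂ : ℝ) (ha₁ : 0 < a₁) (ha₂ : 0 < a₂)
    (hα₁ : 0 < α₁) (hα₂ : 0 < α₂) (hne : α₁ ≠ α₂) :
    ∀ t : ℝ, frenetCurvature (curveX a₁ a₂ α₁ α₂) 3 t
      = α₁ * α₂ / Real.sqrt (a₁ ^ 2 * α₁ ^ 4 + a₂ ^ 2 * α₂ ^ 4) := by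
  intro t
  set P2 := a₁ ^ 2 * α₁ ^ 2 + a₂ ^ 2 * α₂ ^ 2 with hP2def
  set P4 := a₁ ^ 2 * α₁ ^ 4 + a₂ ^ 2 * α₂ ^ 4 with hP4def
  set G := a₁ ^ 2 * a₂ ^ 2 * α₁ ^ 2 * α₂ ^ 2 * (α₁ ^ 2 - α₂ ^ 2) ^ 2 with hGdef
  have hP2 : 0 < P2 := by positivity
  have hP4 : 0 < P4 := by positivity
  have hG : 0 < G := by
    have h : α₁ ^ 2 - α₂ ^ 2 ≠ 0 := by
      intro h
      apply hne
      nlinarith [sq_nonneg (α₁ - α₂), sq_nonneg (α₁ + α₂)]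
    positivity
  have hnorm : ‖deriv (curveX a₁ a₂ α₁ α₂) t‖ = Real.sqrt P2 := by
    rw [(hd01 a₁ a₂ α₁ α₂ t).deriv, EuclideanSpace.norm_eq]
    congr 1
    simp [X1, vec4, WithLp.equiv_symm_apply, PiLp.toLp_apply, Fin.sum_univ_four, Real.norm_eq_abs, sq_abs,
      hP2def]
    ring_nf
    simp only [Real.cos_sq']
    ring
  rw [frenetCurvature]
  norm_num
  rw [gram2 a₁ a₂ α₁ α₂ t, gram3 a₁ a₂ α₁ α₂ t, gram4 a₁ a₂ α₁ α₂ t, hnorm]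
  rw [← hP2def, ← hP4def, ← hGdef]
  have hs : Real.sqrt (G ^ 2 * α₁ ^ 2 * α₂ ^ 2 * (P2 * P4))
      = G * α₁ * α₂ * (Real.sqrt P2 * Real.sqrt P4) := by
    rw [show G ^ 2 * α₁ ^ 2 * α₂ ^ 2 * (P2 * P4) = (G * α₁ * α₂) ^ 2 * (P2 * P4) by ring,
      Real.sqrt_mul (sq_nonneg _), Real.sqrt_sq (by positivity),
      Real.sqrt_mul hP2.le]
  rw [hs]
  have hS2 : Real.sqrt P2 ≠ 0 := ne_of_gt (Real.sqrt_pos.mpr hP2)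
  have hS4 : Real.sqrt P4 ≠ 0 := ne_of_gt (Real.sqrt_pos.mpr hP4)
  have hSS4 : Real.sqrt P4 * Real.sqrt P4 = P4 := Real.mul_self_sqrt hP4.le
  field_simp
  linear_combination hSS4
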